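/- Let K > 0, Λ ∈ ℝ, c > 0 (the product λκ) and 0 < p_uv < √K, and let p(i) := √(P(i)) with P(i) = K·(E(i)·(p_uv² + K) + (p_uv² − K))/(E(i)·(p_uv² + K) − (p_uv² − K)), E(i) = exp(2c(Λ − i)), and q(i) := K/p(i), for i ≤ Λ. Then p is strictly decreasing and q is strictly increasing on (−∞, Λ], with p_uv ≤ p(i) < √K < q(i) ≤ K/p_uv, and in the infrared limit both converge to the non-Gaussian fixed point: lim_{i → −∞} p(i) = lim_{i → −∞} q(i) = √K. -/

import Mathlib

/-- Infrared behaviour of the one-loop RG flow of the Grosse–Wulkenhaar model in a magnetic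
field: along the explicit solution `p(i) = √(P(i))`, `q(i) = K/p(i)`, the function `p` is
strictly decreasing and `q` strictly increasing on `(−∞, Λ]`, with
`p_uv ≤ p(i) < √K < q(i) ≤ K/p_uv`, and both converge to the non-Gaussian infrared fixed
point `√K` as `i → −∞`. -/
theorem gw_flow_infrared_fixed_point (K Λ c puv : ℝ) (hK : 0 < K) (hc : 0 < c)
    (hpuv : 0 < puv) (hpuvK : puv < Real.sqrt K)
    (E P p q : ℝ → ℝ)
    (hE : ∀ i, E i = Real.exp (2 * c * (Λ - i)))
    (hP : ∀ i, P i = K * (E i * (puv ^ 2 + K) + (puv ^ 2 - K))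
        / (E i * (puv ^ 2 + K) - (puv ^ 2 - K)))
    (hp : ∀ i, p i = Real.sqrt (P i))
    (hq : ∀ i, q i = K / p i) :
    StrictAntiOn p (Set.Iic Λ)
    ∧ StrictMonoOn q (Set.Iic Λ)
    ∧ (∀ i ≤ Λ, puv ≤ p i ∧ p i < Real.sqrt K ∧ Real.sqrt K < q i ∧ q i ≤ K / puv)
    ∧ Filter.Tendsto p Filter.atBot (nhds (Real.sqrt K))
    ∧ Filter.Tendsto q Filter.atBot (nhds (Real.sqrt K)) := by
  have hK' : (0:ℝ) < Real.sqrt K := Real.sqrt_pos.mpr hK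
  have hKsq : Real.sqrt K * Real.sqrt K = K := Real.mul_self_sqrt hK.le
  have hpuv2 : puv ^ 2 < K := by nlinarith
  have hApos : (0:ℝ) < puv ^ 2 + K := by positivity
  have hBneg : puv ^ 2 - K < 0 := by linarith
  have hEpos : ∀ i, 0 < E i := fun i => by rw [hE]; exact Real.exp_pos _
  have hD : ∀ i, 0 < E i * (puv ^ 2 + K) - (puv ^ 2 - K) := fun i => by
    nlinarith [hEpos i]
  have hE1 : ∀ i ≤ Λ, 1 ≤ E i := by
    intro i hi
    rw [hE]
    have h0 : (0:ℝ) ≤ 2 * c * (Λ - i) := by nlinarith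
    simpa using Real.one_le_exp h0
  have hN : ∀ i ≤ Λ, 0 < E i * (puv ^ 2 + K) + (puv ^ 2 - K) := by
    intro i hi
    nlinarith [hE1 i hi, sq_nonneg puv, hpuv]
  have hPpos : ∀ i ≤ Λ, 0 < P i := by
    intro i hi
    rw [hP]
    exact div_pos (mul_pos hK (hN i hi)) (hD i)
  have hPltK : ∀ i, P i < K := by
    intro i
    rw [hP, div_lt_iff₀ (hD i)]
    nlinarith [hEpos i]
  have hEanti : StrictAnti E := by
    intro i1 i2 h
    rw [hE, hE]
    exact Real.exp_lt_exp.mpr (by nlinarith)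
  have hPanti : StrictAntiOn P (Set.Iic Λ) := by
    intro i1 h1 i2 h2 h12
    rw [hP, hP, div_lt_div_iff₀ (hD i2) (hD i1)]
    have hE12 : E i2 < E i1 := hEanti h12
    nlinarith [mul_pos (mul_pos hK hApos) (sub_pos.mpr hE12), hBneg]
  have hppos : ∀ i ≤ Λ, 0 < p i := fun i hi => by
    rw [hp]; exact Real.sqrt_pos.mpr (hPpos i hi)
  have hpanti : StrictAntiOn p (Set.Iic Λ) := by
    intro i1 h1 i2 h2 h12
    rw [hp, hp]
    exact Real.sqrt_lt_sqrt (hPpos i2 h2).le (hPanti h1 h2 h12)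
  have hqmono : StrictMonoOn q (Set.Iic Λ) := by
    intro i1 h1 i2 h2 h12
    rw [hq, hq]
    exact div_lt_div_of_pos_left hK (hppos i2 h2) (hpanti h1 h2 h12)
  have hEΛ : E Λ = 1 := by rw [hE]; simp
  have hPΛ : P Λ = puv ^ 2 := by
    rw [hP, hEΛ, one_mul]
    rw [show puv ^ 2 + K + (puv ^ 2 - K) = 2 * puv ^ 2 by ring,
        show puv ^ 2 + K - (puv ^ 2 - K) = 2 * K by ring]
    field_simp
  have hpΛ : p Λ = puv := by
    rw [hp, hPΛ, Real.sqrt_sq hpuv.le]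
  have hbounds : ∀ i ≤ Λ, puv ≤ p i ∧ p i < Real.sqrt K ∧ Real.sqrt K < q i ∧ q i ≤ K / puv := by
    intro i hi
    have h1 : puv ≤ p i := by
      rcases eq_or_lt_of_le hi with h | h
      · rw [h, hpΛ]
      · rw [← hpΛ]
        exact (hpanti hi Set.self_mem_Iic h).le
    have h2 : p i < Real.sqrt K := by
      rw [hp]
      exact Real.sqrt_lt_sqrt (hPpos i hi).le (hPltK i)
    have hpipos := hppos i hi
    have h3 : Real.sqrt K < q i := by
      rw [hq, lt_div_iff₀ hpipos]
      nlinarith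
    have h4 : q i ≤ K / puv := by
      rw [hq]
      exact div_le_div_of_nonneg_left hK.le hpuv h1
    exact ⟨h1, h2, h3, h4⟩
  have hEtop : Filter.Tendsto E Filter.atBot Filter.atTop := by
    have hfun : E = fun i => Real.exp (2 * c * (Λ - i)) := funext hE
    rw [hfun]
    apply Real.tendsto_exp_atTop.comp
    apply Filter.Tendsto.const_mul_atTop (by positivity : (0:ℝ) < 2 * c)
    exact (Filter.tendsto_atTop_add_const_left Filter.atBot Λ
        (Filter.tendsto_neg_atBot_atTop (G := ℝ))).congr fun x => (sub_eq_add_neg Λ x).symm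
  have hy : Filter.Tendsto (fun i => (puv ^ 2 - K) / E i) Filter.atBot (nhds 0) :=
    Filter.Tendsto.div_atTop tendsto_const_nhds hEtop
  have hPeq : ∀ i, P i = K * ((puv ^ 2 + K) + (puv ^ 2 - K) / E i)
      / ((puv ^ 2 + K) - (puv ^ 2 - K) / E i) := by
    intro i
    have hE0 := (hEpos i).ne'
    have hD0 := (hD i).ne'
    have hD2 : (puv ^ 2 + K) - (puv ^ 2 - K) / E i ≠ 0 := by
      have : (puv ^ 2 - K) / E i < 0 := div_neg_of_neg_of_pos hBneg (hEpos i)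
      have : 0 < (puv ^ 2 + K) - (puv ^ 2 - K) / E i := by linarith
      exact this.ne'
    have hD2pos : 0 < (puv ^ 2 + K) - (puv ^ 2 - K) / E i := by
      have := div_neg_of_neg_of_pos hBneg (hEpos i)
      linarith
    rw [hP, div_eq_div_iff (hD i).ne' hD2pos.ne']
    field_simp
  have hPlim : Filter.Tendsto P Filter.atBot (nhds K) := by
    have hT : Filter.Tendsto (fun i => K * ((puv ^ 2 + K) + (puv ^ 2 - K) / E i)
        / ((puv ^ 2 + K) - (puv ^ 2 - K) / E i)) Filter.atBot
        (nhds (K * ((puv ^ 2 + K) + 0) / ((puv ^ 2 + K) - 0))) := by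
      apply Filter.Tendsto.div
      · exact (tendsto_const_nhds.add hy).const_mul K
      · exact tendsto_const_nhds.sub hy
      · simpa using hApos.ne'
    have heq : K * ((puv ^ 2 + K) + 0) / ((puv ^ 2 + K) - 0) = K := by
      field_simp
      simp [hApos.ne']
    rw [heq] at hT
    exact hT.congr fun i => (hPeq i).symm
  have hplim : Filter.Tendsto p Filter.atBot (nhds (Real.sqrt K)) := by
    have := (Real.continuous_sqrt.tendsto K).comp hPlim
    exact this.congr fun i => (hp i).symm
  have hqlim : Filter.Tendsto q Filter.atBot (nhds (Real.sqrt K)) := by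
    have hT : Filter.Tendsto (fun i => K / p i) Filter.atBot (nhds (K / Real.sqrt K)) :=
      tendsto_const_nhds.div hplim hK'.ne'
    rw [show K / Real.sqrt K = Real.sqrt K from by
      rw [eq_comm, eq_div_iff hK'.ne', hKsq]] at hT
    exact hT.congr fun i => (hq i).symm
  exact ⟨hpanti, hqmono, hbounds, hplim, hqlim⟩
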